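/- Let (x_m)_{m≥1} be a real sequence with x₁ = 1, write B(n,k) := B_{n,k}(x₁, x₂, ...), and let r ≥ 1, s ≥ 0 be integers. Then A_n( sB(r+1, r)/(r(r+1)), ..., (s/(mr)) · B((r+1)m, mr) / C((r+1)m, mr), ... ) = (s/(nr+s)) · B((r+1)n + s, nr + s) / C((r+1)n + s, nr + s), where A_n is the complete Bell polynomial and the m-th argument is (s/(mr)) · B((r+1)m, mr) / C((r+1)m, mr). -/

import Mathlib

open Finset

/-- The exponential partial Bell polynomial `B_{n,k}(x₁,x₂,…)`, defined via the
generating function `∑_{n} B_{n,k} tⁿ/n! = (1/k!) (∑_{m≥1} x_m t^m/m!)^k`. -/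
noncomputable def bellB (n k : ℕ) (x : ℕ → ℝ) : ℝ :=
  ((Nat.factorial n : ℝ) / (Nat.factorial k : ℝ)) *
    PowerSeries.coeff n
      ((PowerSeries.mk fun m => if m = 0 then 0 else x m / (Nat.factorial m : ℝ)) ^ k)

/-- The complete Bell polynomial `A_n(x₁,…,x_n) = ∑_{k=1}^n B_{n,k}`, `A₀ = 1`. -/
noncomputable def bellA (n : ℕ) (x : ℕ → ℝ) : ℝ :=
  if n = 0 then 1 else ∑ k ∈ Finset.Icc 1 n, bellB n k x

namespace LagAux

open Finset PowerSeries

noncomputable section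

/-- coefficient of `v^m` vanishes below `m` when `v` has zero constant term. -/
lemma coeff_pow_eq_zero {v : ℝ⟦X⟧} (hv : constantCoeff v = 0) {n m : ℕ} (h : n < m) :
    coeff n (v ^ m) = 0 := by
  obtain ⟨u, rfl⟩ := (PowerSeries.X_dvd_iff).2 hv
  rw [mul_pow, PowerSeries.coeff_X_pow_mul', if_neg (by omega)]

/-- Formal composition `f ∘ v`, defined coefficientwise (sensible when `v₀ = 0`). -/
def comp (f v : ℝ⟦X⟧) : ℝ⟦X⟧ :=
  PowerSeries.mk fun n => ∑ m ∈ range (n + 1), coeff m f * coeff n (v ^ m)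

lemma coeff_comp (f v : ℝ⟦X⟧) (n : ℕ) :
    coeff n (comp f v) = ∑ m ∈ range (n + 1), coeff m f * coeff n (v ^ m) := by
  simp [comp]

lemma coeff_comp_of_le {v : ℝ⟦X⟧} (hv : constantCoeff v = 0) (f : ℝ⟦X⟧) {n N : ℕ}
    (h : n ≤ N) :
    coeff n (comp f v) = ∑ m ∈ range (N + 1), coeff m f * coeff n (v ^ m) := by
  rw [coeff_comp]
  apply Finset.sum_subset (Finset.range_subset_range.2 (by omega))
  intro m _ hm
  rw [Finset.mem_range, not_lt] at hm
  rw [coeff_pow_eq_zero hv (by omega), mul_zero]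

/-- triangular double-sum description. -/
lemma sum_tri (n : ℕ) (t : ℕ × ℕ → ℝ) :
    ∑ M ∈ range (n + 1), ∑ x ∈ Finset.HasAntidiagonal.antidiagonal M, t x
      = ∑ x ∈ ((range (n+1)) ×ˢ (range (n+1))).filter (fun x => x.1 + x.2 ≤ n), t x := by
  rw [← Finset.sum_biUnion]
  · congr 1
    ext x
    simp only [Finset.mem_biUnion, Finset.mem_range, Finset.HasAntidiagonal.mem_antidiagonal,
      Finset.mem_filter, Finset.mem_product]
    constructor
    · rintro ⟨M, hM, rfl⟩; omega
    · intro h; exact ⟨x.1 + x.2, by omega, rfl⟩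
  · intro a _ b _ hab
    simp only [Finset.disjoint_left, Finset.HasAntidiagonal.mem_antidiagonal]
    rintro x rfl h; exact hab h

lemma comp_mul {v : ℝ⟦X⟧} (hv : constantCoeff v = 0) (f h : ℝ⟦X⟧) :
    comp (f * h) v = comp f v * comp h v := by
  ext n
  rw [PowerSeries.coeff_mul, coeff_comp]
  have key : ∀ x ∈ Finset.HasAntidiagonal.antidiagonal n,
      coeff x.1 (comp f v) * coeff x.2 (comp h v)
        = ∑ m ∈ range (n+1), ∑ m' ∈ range (n+1),
            (coeff m f * coeff m' h) * (coeff x.1 (v^m) * coeff x.2 (v^m')) := by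
    intro x hx
    rw [Finset.HasAntidiagonal.mem_antidiagonal] at hx
    rw [coeff_comp_of_le hv f (by omega : x.1 ≤ n), coeff_comp_of_le hv h (by omega : x.2 ≤ n),
      Finset.sum_mul_sum]
    apply Finset.sum_congr rfl; intro m _
    apply Finset.sum_congr rfl; intro m' _
    ring
  rw [Finset.sum_congr rfl key, Finset.sum_comm]
  have key2 : ∀ m ∈ range (n+1),
      (∑ x ∈ Finset.HasAntidiagonal.antidiagonal n, ∑ m' ∈ range (n+1),
        (coeff m f * coeff m' h) * (coeff x.1 (v^m) * coeff x.2 (v^m')))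
      = ∑ m' ∈ range (n+1), (coeff m f * coeff m' h) * coeff n (v^(m+m')) := by
    intro m _
    rw [Finset.sum_comm]
    apply Finset.sum_congr rfl; intro m' _
    rw [← Finset.mul_sum, pow_add, PowerSeries.coeff_mul]
  rw [Finset.sum_congr rfl key2]
  -- now handle the LHS
  have key3 : ∀ M ∈ range (n+1), coeff M (f * h) * coeff n (v ^ M)
      = ∑ x ∈ Finset.HasAntidiagonal.antidiagonal M, coeff x.1 f * coeff x.2 h * coeff n (v ^ (x.1 + x.2)) := by
    intro M _
    rw [PowerSeries.coeff_mul, Finset.sum_mul]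
    apply Finset.sum_congr rfl; intro x hx
    rw [Finset.HasAntidiagonal.mem_antidiagonal] at hx
    rw [← hx]
  rw [Finset.sum_congr rfl key3, sum_tri]
  rw [Finset.sum_subset (Finset.filter_subset _ _)]
  · rw [Finset.sum_product]
  · intro x hx hx'
    rw [Finset.mem_filter, not_and] at hx'
    have h2 : ¬ (x.1 + x.2 ≤ n) := hx' hx
    rw [coeff_pow_eq_zero hv (by omega : n < x.1 + x.2), mul_zero]

lemma comp_one {v : ℝ⟦X⟧} : comp 1 v = 1 := by
  ext n
  rw [coeff_comp]
  simp only [PowerSeries.coeff_one]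
  rw [Finset.sum_eq_single 0]
  · simp
  · intro m _ hm; simp [hm]
  · intro h; simp at h

lemma comp_pow {v : ℝ⟦X⟧} (hv : constantCoeff v = 0) (f : ℝ⟦X⟧) (k : ℕ) :
    comp (f ^ k) v = (comp f v) ^ k := by
  induction k with
  | zero => simpa using comp_one
  | succ k ih => rw [pow_succ, pow_succ, comp_mul hv, ih]

lemma comp_C_mul {v : ℝ⟦X⟧} (c : ℝ) (f : ℝ⟦X⟧) :
    comp (PowerSeries.C c * f) v = PowerSeries.C c * comp f v := by
  ext n
  rw [coeff_comp, PowerSeries.coeff_C_mul, coeff_comp, Finset.mul_sum]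
  apply Finset.sum_congr rfl; intro m _
  rw [PowerSeries.coeff_C_mul]; ring

lemma comp_deriv {v : ℝ⟦X⟧} (hv : constantCoeff v = 0) (f : ℝ⟦X⟧) :
    d⁄dX ℝ (comp f v) = comp (d⁄dX ℝ f) v * d⁄dX ℝ v := by
  ext n
  rw [PowerSeries.coeff_derivative, coeff_comp, PowerSeries.coeff_mul]
  have key : ∀ x ∈ Finset.HasAntidiagonal.antidiagonal n,
      coeff x.1 (comp (d⁄dX ℝ f) v) * coeff x.2 (d⁄dX ℝ v)
      = ∑ m' ∈ range (n+1),
          (coeff (m'+1) f * (m'+1)) * (coeff x.1 (v^m') * coeff x.2 (d⁄dX ℝ v)) := by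
    intro x hx
    rw [Finset.HasAntidiagonal.mem_antidiagonal] at hx
    rw [coeff_comp_of_le hv _ (by omega : x.1 ≤ n), Finset.sum_mul]
    apply Finset.sum_congr rfl; intro m' _
    rw [PowerSeries.coeff_derivative]; ring
  rw [Finset.sum_congr rfl key, Finset.sum_comm]
  have key2 : ∀ m' ∈ range (n+1),
      (∑ x ∈ Finset.HasAntidiagonal.antidiagonal n,
        (coeff (m'+1) f * (m'+1)) * (coeff x.1 (v^m') * coeff x.2 (d⁄dX ℝ v)))
      = coeff (m'+1) f * ((m'+1) * coeff n (v ^ m' * d⁄dX ℝ v)) := by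
    intro m' _
    rw [← Finset.mul_sum, ← PowerSeries.coeff_mul]; ring
  rw [Finset.sum_congr rfl key2]
  -- LHS: expand the derivative of v^m
  have key3 : ∀ m ∈ range (n+2), coeff m f * coeff (n+1) (v ^ m) * (n+1)
      = coeff m f * (m * coeff n (v ^ (m-1) * d⁄dX ℝ v)) := by
    intro m _
    have : coeff (n+1) (v ^ m) * (n+1) = coeff n (d⁄dX ℝ (v ^ m)) := by
      rw [PowerSeries.coeff_derivative]
    rw [mul_assoc, this, Derivation.leibniz_pow, smul_eq_mul, map_nsmul, nsmul_eq_mul]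
  rw [Finset.sum_mul, Finset.sum_congr rfl key3, Finset.sum_range_succ']
  simp only [Nat.cast_zero, zero_mul, mul_zero, add_zero, Nat.add_sub_cancel]
  apply Finset.sum_congr rfl; intro i _
  push_cast
  ring
lemma ode_uniq (q : ℝ⟦X⟧) {y z : ℝ⟦X⟧} (h0 : constantCoeff y = constantCoeff z)
    (hy : d⁄dX ℝ y = q * y) (hz : d⁄dX ℝ z = q * z) : y = z := by
  ext n
  induction n using Nat.strong_induction_on with
  | _ n ih =>
    match n with
    | 0 => simpa [PowerSeries.coeff_zero_eq_constantCoeff] using h0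
    | Nat.succ k =>
      have h1 := congrArg (coeff k) hy
      have h2 := congrArg (coeff k) hz
      rw [PowerSeries.coeff_derivative, PowerSeries.coeff_mul] at h1 h2
      have e : ∑ x ∈ Finset.HasAntidiagonal.antidiagonal k, coeff x.1 q * coeff x.2 y
            = ∑ x ∈ Finset.HasAntidiagonal.antidiagonal k, coeff x.1 q * coeff x.2 z := by
        apply Finset.sum_congr rfl; intro x hx
        rw [Finset.HasAntidiagonal.mem_antidiagonal] at hx
        rw [ih x.2 (by omega)]
      have hk : ((k : ℝ) + 1) ≠ 0 := by positivity
      have : coeff (k+1) y * ((k:ℝ)+1) = coeff (k+1) z * ((k:ℝ)+1) := by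
        rw [h1, h2, e]
      exact mul_right_cancel₀ hk this

section Main

variable (F : ℝ⟦X⟧)

/-- `a n k = [t^n] F^k`. -/
def a (n k : ℕ) : ℝ := coeff n (F ^ k)

variable {F}

lemma a_zero (hF : constantCoeff F = 1) (k : ℕ) : a F 0 k = 1 := by
  rw [a, PowerSeries.coeff_zero_eq_constantCoeff, map_pow, hF, one_pow]

lemma a_kzero (n : ℕ) : a F n 0 = if n = 0 then 1 else 0 := by
  rw [a, pow_zero, PowerSeries.coeff_one]

lemma convF (k l n : ℕ) : ∑ x ∈ Finset.HasAntidiagonal.antidiagonal n, a F x.1 k * a F x.2 l = a F n (k + l) := by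
  rw [a, pow_add, PowerSeries.coeff_mul]; rfl

lemma lemD (k l n : ℕ) :
    ∑ x ∈ Finset.HasAntidiagonal.antidiagonal n, (x.1 : ℝ) * a F x.1 k * a F x.2 l
      = (k / (k + l : ℝ)) * n * a F n (k + l) := by
  rcases Nat.eq_zero_or_pos k with hk | hk
  · subst hk
    rw [Finset.sum_eq_zero]
    · simp
    · intro x hx
      rcases Nat.eq_zero_or_pos x.1 with h1 | h1
      · rw [h1]; simp
      · rw [a_kzero, if_neg (by omega), mul_zero, zero_mul]
  rcases n with _ | N
  · simp
  · have e1 : ∑ x ∈ Finset.HasAntidiagonal.antidiagonal (N+1), (x.1 : ℝ) * a F x.1 k * a F x.2 l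
        = coeff N (d⁄dX ℝ (F ^ k) * F ^ l) := by
      rw [PowerSeries.coeff_mul, Finset.Nat.sum_antidiagonal_succ]
      simp only [Nat.cast_zero, zero_mul]
      rw [zero_add]
      apply Finset.sum_congr rfl; intro x _
      rw [PowerSeries.coeff_derivative]
      push_cast [a]
      ring
    have e2 : ∀ m j : ℕ, 1 ≤ m → m + j = k + l → d⁄dX ℝ (F ^ m) * F ^ j
        = m • (F ^ (k + l - 1) * d⁄dX ℝ F) := by
      intro m j hm hmj
      rw [Derivation.leibniz_pow, smul_eq_mul, smul_mul_assoc]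
      congr 1
      rw [mul_assoc, mul_comm (d⁄dX ℝ F), ← mul_assoc, ← pow_add]
      congr 2
      omega
    have e3 : coeff N (d⁄dX ℝ (F^k) * F^l) = k * coeff N (F^(k+l-1) * d⁄dX ℝ F) := by
      rw [e2 k l hk rfl, map_nsmul, nsmul_eq_mul]
    have hkl : 1 ≤ k + l := by omega
    have h5 := e2 (k+l) 0 hkl (by omega)
    rw [pow_zero, mul_one] at h5
    have e4 : ((N:ℝ)+1) * a F (N+1) (k+l) = (k+l : ℕ) * coeff N (F^(k+l-1) * d⁄dX ℝ F) := by
      have h6 : coeff N (d⁄dX ℝ (F^(k+l))) = coeff (N+1) (F^(k+l)) * ((N:ℝ)+1) := by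
        rw [PowerSeries.coeff_derivative]
      rw [h5, map_nsmul, nsmul_eq_mul] at h6
      rw [a]
      linear_combination -h6
    have hklR : ((k:ℝ) + l) ≠ 0 := by
      have : (0:ℕ) < k + l := hkl
      push_cast [← Nat.cast_add]
      exact_mod_cast Nat.pos_iff_ne_zero.mp this
    rw [e1, e3]
    push_cast at e4 ⊢
    field_simp
    linear_combination -e4


variable (F) in
/-- The Lagrange coefficient array: `Cc n m = [t^n] w^m` where `w = t·F(w)^r`. -/
def Cc (r : ℕ) (n m : ℕ) : ℝ :=
  if n = 0 then (if m = 0 then 1 else 0)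
  else if m ≤ n then (m : ℝ) / n * a F (n - m) (n * r) else 0

variable {r : ℕ}

lemma Cc_big {n m : ℕ} (h : n < m) : Cc F r n m = 0 := by
  unfold Cc
  split_ifs with h1 h2 <;> first | rfl | omega | (exfalso; omega)

lemma Cc_k0 (n : ℕ) : Cc F r n 0 = if n = 0 then 1 else 0 := by
  by_cases h : n = 0 <;> simp [Cc, h]

lemma Cc_00 : Cc F r 0 0 = 1 := by simp [Cc]

lemma lemG (hF : constantCoeff F = 1) (hr : 1 ≤ r) {m : ℕ} (hm : 1 ≤ m) (N q : ℕ) :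
    ∑ j ∈ range (N + 1), a F j (m * r) * Cc F r N (j + q) = Cc F r (N + m) (m + q) := by
  have hmR : (m:ℝ) ≠ 0 := by positivity
  rcases Nat.eq_zero_or_pos N with hN | hN
  · subst hN
    rw [Finset.sum_range_one, a_zero hF, one_mul]
    simp only [Nat.zero_add, Nat.add_zero, zero_add, add_zero]
    rcases Nat.eq_zero_or_pos q with hq | hq
    · subst hq
      simp only [Nat.add_zero, add_zero]
      rw [Cc_00, Cc, if_neg (by omega), if_pos le_rfl, Nat.sub_self, a_zero hF, mul_one,
        div_self hmR]
    · rw [Cc, if_pos rfl, if_neg (by omega), Cc, if_neg (by omega), if_neg (by omega)]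
  rcases Nat.lt_or_ge N q with hq | hq
  · rw [Finset.sum_eq_zero, Cc, if_neg (by omega), if_neg (by omega)]
    intro j _
    rw [Cc, if_neg (by omega), if_neg (by omega), mul_zero]
  · -- main case : N ≥ 1, q ≤ N
    set P := N - q with hP
    have step1 : ∑ j ∈ range (N + 1), a F j (m * r) * Cc F r N (j + q)
        = ∑ j ∈ range (P + 1), a F j (m * r) * ((j + q : ℝ) / N * a F (N - (j + q)) (N * r)) := by
      rw [← Finset.sum_subset (Finset.range_subset_range.2 (by omega : P + 1 ≤ N + 1))]
      · apply Finset.sum_congr rfl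
        intro j hj
        rw [Finset.mem_range] at hj
        rw [Cc, if_neg (by omega), if_pos (by omega)]
        push_cast
        ring
      · intro j _ hj
        rw [Finset.mem_range, not_lt] at hj
        rw [Cc, if_neg (by omega), if_neg (by omega), mul_zero]
    rw [step1]
    have step2 : ∑ j ∈ range (P + 1), a F j (m * r) * ((j + q : ℝ) / N * a F (N - (j + q)) (N * r))
        = ∑ x ∈ Finset.HasAntidiagonal.antidiagonal P,
            ((x.1 : ℝ) / N) * (a F x.1 (m * r) * a F x.2 (N * r))
          + ∑ x ∈ Finset.HasAntidiagonal.antidiagonal P,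
            ((q : ℝ) / N) * (a F x.1 (m * r) * a F x.2 (N * r)) := by
      rw [← Finset.sum_add_distrib]
      rw [Finset.Nat.sum_antidiagonal_eq_sum_range_succ_mk]
      apply Finset.sum_congr rfl
      intro j hj
      rw [Finset.mem_range] at hj
      have : N - (j + q) = P - j := by omega
      rw [this]
      push_cast
      ring
    rw [step2]
    have d1 : ∑ x ∈ Finset.HasAntidiagonal.antidiagonal P, ((x.1 : ℝ) / N) * (a F x.1 (m * r) * a F x.2 (N * r))
        = (1 / (N : ℝ)) * (((m*r : ℕ) : ℝ) / (((m*r : ℕ) : ℝ) + ((N*r : ℕ) : ℝ)) * ((P : ℕ) : ℝ)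
            * a F P (m * r + N * r)) := by
      rw [← lemD (m*r) (N*r) P, Finset.mul_sum]
      apply Finset.sum_congr rfl; intro x _
      ring
    have d2 : ∑ x ∈ Finset.HasAntidiagonal.antidiagonal P, ((q : ℝ) / N) * (a F x.1 (m * r) * a F x.2 (N * r))
        = ((q : ℝ) / N) * a F P (m * r + N * r) := by
      rw [← convF (m*r) (N*r) P, Finset.mul_sum]
    rw [d1, d2]
    have hmr : m * r + N * r = (N + m) * r := by ring
    rw [hmr, Cc, if_neg (by omega), if_pos (by omega)]
    have hsub : N + m - (m + q) = P := by omega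
    rw [hsub]
    have hNR : (N : ℝ) ≠ 0 := by positivity
    have hNmR : ((N : ℝ) + m) ≠ 0 := by positivity
    have hrR : (r : ℝ) ≠ 0 := by
      have : 0 < r := hr
      positivity
    have hPR : ((P : ℕ) : ℝ) = (N : ℝ) - (q : ℝ) := by
      rw [hP, Nat.cast_sub hq]
    push_cast
    push_cast at hPR
    rw [hPR]
    field_simp
    ring

lemma lemConv (hF : constantCoeff F = 1) (hr : 1 ≤ r) (n : ℕ) (p q : ℕ) :
    ∑ x ∈ Finset.HasAntidiagonal.antidiagonal n, Cc F r x.1 p * Cc F r x.2 q = Cc F r n (p + q) := by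
  induction n using Nat.strong_induction_on generalizing p q with
  | _ n ih =>
  rcases Nat.eq_zero_or_pos p with hp | hp
  · subst hp
    rw [zero_add, Finset.Nat.sum_antidiagonal_eq_sum_range_succ_mk, Finset.sum_eq_single 0]
    · rw [Cc_00, one_mul, Nat.sub_zero]
    · intro i _ hne
      rw [Cc, if_neg hne, if_pos (Nat.zero_le i)]
      simp
    · intro h; simp at h
  · rcases Nat.lt_or_ge n p with hnp | hnp
    · rw [Finset.sum_eq_zero, Cc_big (by omega)]
      intro x hx
      rw [Finset.HasAntidiagonal.mem_antidiagonal] at hx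
      rw [Cc_big (by omega : x.1 < p), zero_mul]
    · set P := n - p with hPdef
      rw [Finset.Nat.sum_antidiagonal_eq_sum_range_succ_mk]
      have hsub : Finset.Ico p (n+1) ⊆ range (n+1) := by
        rw [Finset.range_eq_Ico]
        exact Finset.Ico_subset_Ico (by omega) le_rfl
      rw [← Finset.sum_subset hsub (by
        intro i hi hni
        rw [Finset.mem_Ico] at hni
        rw [Finset.mem_range] at hi
        have : i < p := by omega
        rw [Cc_big this, zero_mul])]
      rw [Finset.sum_Ico_eq_sum_range]
      have hrange : n + 1 - p = P + 1 := by omega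
      rw [hrange]
      have expand : ∀ j ∈ range (P+1), Cc F r (p+j) p * Cc F r (n - (p+j)) q
          = ∑ k ∈ range (P+1), a F k (p*r) * (Cc F r j k * Cc F r (P - j) q) := by
        intro j hj
        rw [Finset.mem_range] at hj
        have h1 : Cc F r (p+j) p = ∑ k ∈ range (j+1), a F k (p*r) * Cc F r j k := by
          have := lemG hF hr (m := p) hp j 0
          simp only [add_zero] at this
          rw [Nat.add_comm p j, ← this]
        have h2 : n - (p+j) = P - j := by omega
        rw [h1, h2, Finset.sum_mul]
        rw [Finset.sum_subset (Finset.range_subset_range.2 (by omega : j + 1 ≤ P + 1))]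
        · apply Finset.sum_congr rfl; intro k _; ring
        · intro k _ hk
          rw [Finset.mem_range, not_lt] at hk
          rw [Cc_big (by omega : j < k), mul_zero, zero_mul]
      rw [Finset.sum_congr rfl expand, Finset.sum_comm]
      have inner : ∀ k ∈ range (P+1),
          ∑ j ∈ range (P+1), a F k (p*r) * (Cc F r j k * Cc F r (P - j) q)
            = a F k (p*r) * Cc F r P (k + q) := by
        intro k _
        rw [← Finset.mul_sum]
        congr 1
        rw [← Finset.Nat.sum_antidiagonal_eq_sum_range_succ_mk
          (fun x => Cc F r x.1 k * Cc F r x.2 q)]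
        exact ih P (by omega) k q
      rw [Finset.sum_congr rfl inner, lemG hF hr (m := p) hp P q]
      congr 1
      omega

variable (F) in
/-- the series `w` solving `w = t F(w)^r`. -/
def ww (r : ℕ) : ℝ⟦X⟧ := PowerSeries.mk fun n => Cc F r n 1

lemma constantCoeff_ww : constantCoeff (ww F r) = 0 := by
  rw [← PowerSeries.coeff_zero_eq_constantCoeff]
  simp [ww, Cc]

lemma coeff_ww_pow (hF : constantCoeff F = 1) (hr : 1 ≤ r) (m : ℕ) :
    ∀ n, coeff n (ww F r ^ m) = Cc F r n m := by
  induction m with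
  | zero =>
    intro n
    rw [pow_zero, Cc_k0, PowerSeries.coeff_one]
  | succ m ihm =>
    intro n
    rw [pow_succ, PowerSeries.coeff_mul]
    have : ∀ x ∈ Finset.HasAntidiagonal.antidiagonal n, coeff x.1 (ww F r ^ m) * coeff x.2 (ww F r)
        = Cc F r x.1 m * Cc F r x.2 1 := by
      intro x _
      rw [ihm x.1]
      simp [ww]
    rw [Finset.sum_congr rfl this, lemConv hF hr]


variable (F) in
/-- `L` with `L_m = a(m, mr)/(mr)`. -/
def LL (r : ℕ) : ℝ⟦X⟧ :=
  PowerSeries.mk fun m => if m = 0 then 0 else a F m (m*r) / ((m*r : ℕ) : ℝ)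

variable (F) in
/-- formal logarithm of `F` (defined via its derivative). -/
def ell : ℝ⟦X⟧ :=
  PowerSeries.mk fun j => if j = 0 then 0 else coeff (j-1) (d⁄dX ℝ F * F⁻¹) / j

variable (F) in
/-- `g = F ∘ w`. -/
def gg (r : ℕ) : ℝ⟦X⟧ := comp F (ww F r)

lemma constantCoeff_LL : constantCoeff (LL F r) = 0 := by
  rw [← PowerSeries.coeff_zero_eq_constantCoeff]
  simp [LL]

lemma deriv_ell : d⁄dX ℝ (ell F) = d⁄dX ℝ F * F⁻¹ := by
  ext j
  rw [PowerSeries.coeff_derivative, ell, coeff_mk, if_neg (by omega), Nat.add_sub_cancel]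
  have : ((j:ℝ)+1) ≠ 0 := by positivity
  push_cast
  field_simp

lemma ell_mul_F (hF : constantCoeff F = 1) : d⁄dX ℝ (ell F) * F = d⁄dX ℝ F := by
  rw [deriv_ell, mul_assoc, PowerSeries.inv_mul_cancel F (by rw [hF]; exact one_ne_zero),
    mul_one]

lemma a_eq (n k : ℕ) : a F n k = coeff n (F ^ k) := rfl

lemma pow_eq_mul_pow_pred {m : ℕ} (hm : 1 ≤ m) : F ^ m = F * F ^ (m - 1) := by
  rw [mul_comm, ← pow_succ, Nat.sub_add_cancel hm]

lemma LL_eq_comp (hF : constantCoeff F = 1) (hr : 1 ≤ r) :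
    LL F r = comp (ell F) (ww F r) := by
  ext m
  rw [coeff_comp, LL, coeff_mk]
  rcases Nat.eq_zero_or_pos m with hm | hm
  · subst hm
    simp [ell]
  rw [if_neg (by omega)]
  have hmr : 1 ≤ m * r := Nat.mul_le_mul hm hr
  have hmR : (m:ℝ) ≠ 0 := by positivity
  have hmrR : ((m*r : ℕ):ℝ) ≠ 0 := by
    have : 0 < m * r := hmr
    positivity
  have step : ∀ j ∈ range (m+1), coeff j (ell F) * coeff m (ww F r ^ j)
      = coeff j (ell F) * Cc F r m j := by
    intro j _
    rw [coeff_ww_pow hF hr]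
  rw [Finset.sum_congr rfl step, Finset.sum_range_succ']
  have t0 : coeff 0 (ell F) * Cc F r m 0 = 0 := by
    simp [ell]
  rw [t0, add_zero]
  have step2 : ∀ i ∈ range m, coeff (i+1) (ell F) * Cc F r m (i+1)
      = (coeff i (d⁄dX ℝ F * F⁻¹) * a F ((m-1) - i) (m*r)) / m := by
    intro i hi
    rw [Finset.mem_range] at hi
    rw [ell, coeff_mk, if_neg (by omega), Nat.add_sub_cancel, Cc, if_neg (by omega),
      if_pos (by omega)]
    have : m - (i+1) = (m-1) - i := by omega
    rw [this]
    have hi1 : ((i:ℝ)+1) ≠ 0 := by positivity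
    push_cast
    field_simp
  rw [Finset.sum_congr rfl step2, ← Finset.sum_div]
  have step3 : ∑ i ∈ range m, coeff i (d⁄dX ℝ F * F⁻¹) * a F ((m-1) - i) (m*r)
      = coeff (m-1) ((d⁄dX ℝ F * F⁻¹) * F ^ (m*r)) := by
    rw [PowerSeries.coeff_mul, Finset.Nat.sum_antidiagonal_eq_sum_range_succ_mk]
    apply Finset.sum_congr (by congr 1; omega)
    intro k _
    rfl
  rw [step3]
  have step4 : (d⁄dX ℝ F * F⁻¹) * F ^ (m*r) = F ^ (m*r - 1) * d⁄dX ℝ F := by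
    rw [pow_eq_mul_pow_pred hmr, mul_assoc, ← mul_assoc F⁻¹,
      PowerSeries.inv_mul_cancel F (by rw [hF]; exact one_ne_zero), one_mul]
    ring
  rw [step4]
  have h7 : coeff (m-1) (d⁄dX ℝ (F ^ (m*r))) = coeff m (F ^ (m*r)) * m := by
    rw [PowerSeries.coeff_derivative]
    rw [show m - 1 + 1 = m by omega]
    rw [Nat.cast_sub (by omega : 1 ≤ m)]
    ring
  rw [Derivation.leibniz_pow, smul_eq_mul, map_nsmul, nsmul_eq_mul] at h7
  rw [a_eq, div_eq_div_iff hmrR hmR]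
  linear_combination -h7

lemma deriv_gg (hF : constantCoeff F = 1) (hr : 1 ≤ r) :
    d⁄dX ℝ (gg F r) = d⁄dX ℝ (LL F r) * gg F r := by
  rw [gg, comp_deriv constantCoeff_ww, LL_eq_comp hF hr, comp_deriv constantCoeff_ww]
  rw [mul_assoc, mul_comm (d⁄dX ℝ (ww F r)), ← mul_assoc, ← comp_mul constantCoeff_ww,
    ell_mul_F hF]

lemma coeff_gg_pow (hF : constantCoeff F = 1) (hr : 1 ≤ r) (s : ℕ) {n : ℕ} (hn : 1 ≤ n) :
    coeff n (gg F r ^ s) = (s : ℝ) / ((n*r + s : ℕ) : ℝ) * a F n (n*r + s) := by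
  have hnR : (n:ℝ) ≠ 0 := by positivity
  rw [gg, ← comp_pow constantCoeff_ww, coeff_comp]
  have step : ∀ m ∈ range (n+1), coeff m (F ^ s) * coeff n (ww F r ^ m)
      = a F m s * Cc F r n m := by
    intro m _
    rw [coeff_ww_pow hF hr]
    rfl
  rw [Finset.sum_congr rfl step]
  rw [← Finset.Nat.sum_antidiagonal_eq_sum_range_succ_mk (fun x => a F x.1 s * Cc F r n x.1)]
  have step2 : ∀ x ∈ Finset.HasAntidiagonal.antidiagonal n, a F x.1 s * Cc F r n x.1
      = (1 / (n:ℝ)) * ((x.1 : ℝ) * a F x.1 s * a F x.2 (n*r)) := by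
    intro x hx
    rw [Finset.HasAntidiagonal.mem_antidiagonal] at hx
    rw [Cc, if_neg (by omega), if_pos (by omega)]
    have : n - x.1 = x.2 := by omega
    rw [this]
    field_simp
  rw [Finset.sum_congr rfl step2, ← Finset.mul_sum, lemD s (n*r) n]
  have hco : s + n * r = n * r + s := by omega
  rw [hco]
  rcases Nat.eq_zero_or_pos (n*r+s) with h0 | h0
  · exfalso; have := Nat.mul_le_mul hn hr; omega
  have : ((n*r+s : ℕ):ℝ) ≠ 0 := by positivity
  push_cast at this ⊢
  field_simp
  ring


/-- formal `exp(c·t)`-type series: `∑ c^k t^k / k!`. -/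
def Ee (c : ℝ) : ℝ⟦X⟧ := PowerSeries.mk fun k => c ^ k / (Nat.factorial k : ℝ)

lemma deriv_Ee (c : ℝ) : d⁄dX ℝ (Ee c) = PowerSeries.C c * Ee c := by
  ext k
  rw [PowerSeries.coeff_derivative, PowerSeries.coeff_C_mul, Ee, coeff_mk, coeff_mk,
    Nat.factorial_succ]
  have h1 : ((k:ℝ)+1) ≠ 0 := by positivity
  have h2 : (Nat.factorial k : ℝ) ≠ 0 := by exact_mod_cast Nat.factorial_ne_zero k
  push_cast
  field_simp
  ring

lemma constantCoeff_gg (hF : constantCoeff F = 1) : constantCoeff (gg F r) = 1 := by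
  rw [← PowerSeries.coeff_zero_eq_constantCoeff, gg, coeff_comp]
  rw [Finset.sum_range_one, pow_zero]
  simp [PowerSeries.coeff_zero_eq_constantCoeff, hF]

lemma Es_eq (hF : constantCoeff F = 1) (hr : 1 ≤ r) (s : ℕ) :
    comp (Ee (s:ℝ)) (LL F r) = gg F r ^ s := by
  apply ode_uniq (PowerSeries.C (s:ℝ) * d⁄dX ℝ (LL F r))
  · have hEs : constantCoeff (comp (Ee (s:ℝ)) (LL F r)) = 1 := by
      rw [← PowerSeries.coeff_zero_eq_constantCoeff, coeff_comp]
      rw [Finset.sum_range_one, pow_zero]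
      simp [Ee]
    rw [hEs, map_pow, constantCoeff_gg hF, one_pow]
  · rw [comp_deriv constantCoeff_LL, deriv_Ee, comp_C_mul]
    ring
  · rcases Nat.eq_zero_or_pos s with hs | hs
    · subst hs
      simp
    · rw [Derivation.leibniz_pow, deriv_gg hF hr, smul_eq_mul]
      have hsplit : gg F r ^ (s-1) * (d⁄dX ℝ (LL F r) * gg F r)
          = d⁄dX ℝ (LL F r) * gg F r ^ s := by
        rw [pow_eq_mul_pow_pred (F := gg F r) hs]
        ring
      rw [hsplit, nsmul_eq_mul, map_natCast (PowerSeries.C (R := ℝ)) s]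
      ring

end Main

end

end LagAux


theorem stmt_12 (x : ℕ → ℝ) (hx1 : x 1 = 1) (r s : ℕ) (hr : 1 ≤ r) (n : ℕ) (hn : 1 ≤ n) :
    bellA n
        (fun m => ((s : ℕ) : ℝ) / ((m * r : ℕ) : ℝ) *
          bellB ((r + 1) * m) (m * r) x / ((((r + 1) * m).choose (m * r) : ℕ) : ℝ)) =
      ((s : ℕ) : ℝ) / ((n * r + s : ℕ) : ℝ) *
        bellB ((r + 1) * n + s) (n * r + s) x /
          ((((r + 1) * n + s).choose (n * r + s) : ℕ) : ℝ) := by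
  classical
  set F : PowerSeries ℝ := PowerSeries.mk (fun m => x (m+1) / (Nat.factorial (m+1) : ℝ))
    with hFdef
  have hF : PowerSeries.constantCoeff F = 1 := by
    rw [← PowerSeries.coeff_zero_eq_constantCoeff, hFdef, PowerSeries.coeff_mk]
    simp [hx1]
  have hfX : (PowerSeries.mk fun m => if m = 0 then 0 else x m / (Nat.factorial m : ℝ))
      = PowerSeries.X * F := by
    ext N
    cases N with
    | zero => simp
    | succ N =>
      rw [PowerSeries.coeff_succ_X_mul, hFdef, PowerSeries.coeff_mk, PowerSeries.coeff_mk]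
      simp
  have hcoeff : ∀ N K : ℕ, K ≤ N →
      PowerSeries.coeff N
        ((PowerSeries.mk fun m => if m = 0 then 0 else x m / (Nat.factorial m : ℝ)) ^ K)
        = LagAux.a F (N-K) K := by
    intro N K h
    rw [hfX, mul_pow, PowerSeries.coeff_X_pow_mul', if_pos h]
    rfl
  have hratio : ∀ N K : ℕ, K ≤ N →
      bellB N K x / ((N.choose K : ℕ) : ℝ)
        = (((N-K).factorial : ℕ) : ℝ) * LagAux.a F (N-K) K := by
    intro N K h
    rw [bellB, hcoeff N K h]
    have hch : ((N.choose K : ℕ) : ℝ) * ((K.factorial : ℕ) : ℝ) * (((N-K).factorial : ℕ) : ℝ)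
        = ((N.factorial : ℕ) : ℝ) := by exact_mod_cast Nat.choose_mul_factorial_mul_factorial h
    have h1 : ((N.choose K : ℕ) : ℝ) ≠ 0 := by exact_mod_cast (Nat.choose_pos h).ne'
    have h2 : ((K.factorial : ℕ) : ℝ) ≠ 0 := by exact_mod_cast (Nat.factorial_ne_zero K)
    field_simp
    linear_combination -(LagAux.a F (N-K) K) * hch
  have hG : (PowerSeries.mk fun m => if m = 0 then 0 else
        (((s : ℕ) : ℝ) / ((m * r : ℕ) : ℝ) *
          bellB ((r + 1) * m) (m * r) x / ((((r + 1) * m).choose (m * r) : ℕ) : ℝ))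
          / (Nat.factorial m : ℝ))
      = PowerSeries.C ((s : ℕ) : ℝ) * LagAux.LL F r := by
    ext m
    rw [PowerSeries.coeff_mk, PowerSeries.coeff_C_mul]
    rcases Nat.eq_zero_or_pos m with hm | hm
    · subst hm
      simp [LagAux.LL]
    rw [if_neg (by omega)]
    have heq : (r+1)*m = m*r + m := by ring
    have hKN : m*r ≤ (r+1)*m := by omega
    have hNK : (r+1)*m - (m*r) = m := by omega
    have hrat := hratio ((r+1)*m) (m*r) hKN
    rw [hNK] at hrat
    rw [mul_div_assoc, hrat, LagAux.LL, PowerSeries.coeff_mk, if_neg (by omega)]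
    have hmf : ((m.factorial : ℕ) : ℝ) ≠ 0 := by exact_mod_cast (Nat.factorial_ne_zero m)
    have hmr : 0 < m*r := by positivity
    have hmrR : ((m*r : ℕ) : ℝ) ≠ 0 := by exact_mod_cast hmr.ne'
    field_simp
  rw [bellA, if_neg (by omega : ¬ n = 0)]
  have hbell : ∀ k, bellB n k
      (fun m => ((s : ℕ) : ℝ) / ((m * r : ℕ) : ℝ) *
          bellB ((r + 1) * m) (m * r) x / ((((r + 1) * m).choose (m * r) : ℕ) : ℝ))
      = ((n.factorial : ℕ) : ℝ)/((k.factorial : ℕ) : ℝ)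
          * (((s:ℝ))^k * PowerSeries.coeff n ((LagAux.LL F r)^k)) := by
    intro k
    rw [bellB]
    congr 1
    rw [hG, mul_pow, ← map_pow, PowerSeries.coeff_C_mul]
  rw [Finset.sum_congr rfl (fun k _ => hbell k)]
  have hEs : PowerSeries.coeff n (LagAux.comp (LagAux.Ee ((s:ℕ):ℝ)) (LagAux.LL F r))
      = ∑ k ∈ Finset.range (n+1),
          ((s:ℝ)^k/((k.factorial : ℕ) : ℝ)) * PowerSeries.coeff n ((LagAux.LL F r)^k) := by
    rw [LagAux.coeff_comp]
    apply Finset.sum_congr rfl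
    intro k _
    rw [LagAux.Ee, PowerSeries.coeff_mk]
  have hset : Finset.range (n+1) = insert 0 (Finset.Icc 1 n) := by
    ext k
    simp only [Finset.mem_range, Finset.mem_insert, Finset.mem_Icc]
    omega
  have hstep : ∑ k ∈ Finset.Icc 1 n, ((n.factorial : ℕ) : ℝ)/((k.factorial : ℕ) : ℝ)
          * (((s:ℝ))^k * PowerSeries.coeff n ((LagAux.LL F r)^k))
      = ((n.factorial : ℕ) : ℝ) *
          PowerSeries.coeff n (LagAux.comp (LagAux.Ee ((s:ℕ):ℝ)) (LagAux.LL F r)) := by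
    rw [hEs, hset, Finset.sum_insert (by simp), mul_add]
    have h0 : PowerSeries.coeff n ((LagAux.LL F r)^0) = 0 := by
      rw [pow_zero, PowerSeries.coeff_one, if_neg (by omega)]
    rw [h0]
    simp only [mul_zero, zero_add, pow_zero]
    rw [Finset.mul_sum]
    apply Finset.sum_congr rfl
    intro k _
    have hkf : ((k.factorial : ℕ) : ℝ) ≠ 0 := by exact_mod_cast (Nat.factorial_ne_zero k)
    field_simp
  rw [hstep, LagAux.Es_eq hF hr s, LagAux.coeff_gg_pow hF hr s hn]
  have heq2 : (r+1)*n + s = n*r + s + n := by ring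
  have hKN2 : n*r + s ≤ (r+1)*n + s := by omega
  have hNK2 : (r+1)*n + s - (n*r + s) = n := by omega
  have hrat2 := hratio ((r+1)*n + s) (n*r + s) hKN2
  rw [hNK2] at hrat2
  rw [mul_div_assoc, hrat2]
  ring
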